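/- Let 𝔪 be a non-degenerate graded nilpotent Lie algebra over a field of characteristic 0, and suppose y ∈ 𝔪_{-1} satisfies rank(ad y) = 1. Let W = ker(ad y) and choose x ∈ 𝔪_{-1} with [x,y] ≠ 0. Define y₁ = y and y_{i+1} = [x, y_i]. Let μ be the largest integer with y_μ ≠ 0. Then V = span(y₁, …, y_μ) is a commutative ideal of 𝔪 with [V, W] = 0 and [x, V] ⊆ V. -/
import Mathlib


open Module LinearMap

/-- for `y ∈ 𝔪_{-1}` with `rank (ad y) = 1`, `W = ker (ad y)`,
`x ∈ 𝔪_{-1}` with `⁅x,y⁆ ≠ 0`, and `y₁ = y`, `y_{i+1} = ⁅x, y_i⁆`, with `μ'`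
the largest index with `y_{μ'} ≠ 0`, the span `V` of `y₁, …, y_{μ'}` is a
commutative ideal of `𝔪` with `⁅V, W⁆ = 0` and `⁅x, V⁆ ⊆ V`. -/
theorem stmt3 {k L : Type*} [Field k] [CharZero k] [LieRing L] [LieAlgebra k L]
    (m : ℕ → Submodule k L)
    (hsum : DirectSum.IsInternal fun i => m i)
    (h0 : m 0 = ⊥)
    (μ : ℕ) (hdepth : ∀ i, μ < i → m i = ⊥)
    (hbr : ∀ i j, ∀ x ∈ m i, ∀ y ∈ m j, ⁅x, y⁆ ∈ m (i + j))
    (hgen : ∀ i, 1 ≤ i →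
      m (i + 1) = Submodule.span k {z | ∃ u ∈ m 1, ∃ v ∈ m i, ⁅u, v⁆ = z})
    (hnd : ∀ y ∈ m 1, (∀ z : L, ⁅y, z⁆ = 0) → y = 0)
    (y : L) (hy : y ∈ m 1)
    (hrk : finrank k (LinearMap.range (LieAlgebra.ad k L y)) = 1)
    (x : L) (hx : x ∈ m 1) (hxy : ⁅x, y⁆ ≠ 0)
    (ys : ℕ → L) (hys1 : ys 1 = y)
    (hrec : ∀ i, 1 ≤ i → ys (i + 1) = ⁅x, ys i⁆)
    (μ' : ℕ) (hμ'1 : 1 ≤ μ') (hne : ys μ' ≠ 0) (hzero : ys (μ' + 1) = 0) :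
    ∀ V : Submodule k L, V = Submodule.span k (ys '' Set.Icc 1 μ') →
      (∀ u ∈ V, ∀ v ∈ V, ⁅u, v⁆ = 0) ∧
      (∀ z : L, ∀ v ∈ V, ⁅z, v⁆ ∈ V) ∧
      (∀ v ∈ V, ∀ w : L, ⁅y, w⁆ = 0 → ⁅v, w⁆ = 0) ∧
      (∀ v ∈ V, ⁅x, v⁆ ∈ V) := by
  intro V hV
  subst hV
  set V : Submodule k L := Submodule.span k (ys '' Set.Icc 1 μ') with hVdef
  -- pairwise disjointness of the grading
  have hdisj : ∀ i j : ℕ, i ≠ j → ∀ v : L, v ∈ m i → v ∈ m j → v = 0 := by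
    intro i j hij v hvi hvj
    exact Submodule.disjoint_def.mp
      (hsum.submodule_iSupIndep.pairwiseDisjoint hij) v hvi hvj
  -- membership of ys i in m i
  have hmem0 : ∀ j : ℕ, ys (j + 1) ∈ m (j + 1) := by
    intro j
    induction j with
    | zero => rw [hys1]; exact hy
    | succ n ih =>
      rw [hrec (n + 1) (by omega)]
      have := hbr 1 (n + 1) x hx _ ih
      convert this using 2
      omega
  have hmem : ∀ i : ℕ, 1 ≤ i → ys i ∈ m i := by
    intro i hi
    obtain ⟨j, rfl⟩ : ∃ j, i = j + 1 := ⟨i - 1, by omega⟩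
    exact hmem0 j
  -- vanishing beyond μ'
  have hzero0 : ∀ j : ℕ, ys (μ' + 1 + j) = 0 := by
    intro j
    induction j with
    | zero => exact hzero
    | succ n ih =>
      have h1 : ys (μ' + 1 + n + 1) = ⁅x, ys (μ' + 1 + n)⁆ := hrec _ (by omega)
      have h2 : μ' + 1 + (n + 1) = μ' + 1 + n + 1 := by omega
      rw [h2, h1, ih, lie_zero]
  have hzero' : ∀ i : ℕ, μ' < i → ys i = 0 := by
    intro i hi
    obtain ⟨j, rfl⟩ : ∃ j, i = μ' + 1 + j := ⟨i - μ' - 1, by omega⟩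
    exact hzero0 j
  -- μ' ≥ 2
  have ys2 : ys 2 = ⁅x, y⁆ := by rw [hrec 1 le_rfl, hys1]
  have hμ'2 : 2 ≤ μ' := by
    by_contra h
    have hμ1 : μ' = 1 := by omega
    rw [hμ1] at hzero
    exact hxy (by rw [← ys2]; exact hzero)
  -- generators in V
  have memV : ∀ i : ℕ, 1 ≤ i → i ≤ μ' → ys i ∈ V :=
    fun i h1 h2 => Submodule.subset_span ⟨i, Set.mem_Icc.mpr ⟨h1, h2⟩, rfl⟩
  have memV' : ∀ i : ℕ, 1 ≤ i → ys i ∈ V := by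
    intro i h1
    rcases le_or_gt i μ' with h | h
    · exact memV i h1 h
    · rw [hzero' i h]; exact zero_mem _
  -- ⁅x, V⁆ ⊆ V
  have hxV : ∀ v ∈ V, ⁅x, v⁆ ∈ V := by
    intro v hv
    induction hv using Submodule.span_induction with
    | mem w hw =>
      obtain ⟨i, hi, rfl⟩ := hw
      rw [← hrec i (Set.mem_Icc.mp hi).1]
      exact memV' (i + 1) (by omega)
    | zero => rw [lie_zero]; exact zero_mem _
    | add a b _ _ ha hb => rw [lie_add]; exact add_mem ha hb
    | smul c a _ ha => rw [lie_smul]; exact Submodule.smul_mem _ _ ha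
  -- range of ad y is spanned by ⁅x, y⁆
  have hrange : ∀ z : L, ∃ c : k, ⁅y, z⁆ = c • ⁅x, y⁆ := by
    obtain ⟨v, hv0, hvall⟩ := finrank_eq_one_iff'.mp hrk
    have hex : ⁅y, x⁆ ∈ LinearMap.range (LieAlgebra.ad k L y) :=
      ⟨x, by simp [LieAlgebra.ad_apply]⟩
    obtain ⟨c, hc⟩ := hvall ⟨⁅y, x⁆, hex⟩
    have hc0 : c ≠ 0 := by
      intro h
      rw [h, zero_smul] at hc
      apply hxy
      have : ⁅y, x⁆ = (0 : L) := by
        have := congrArg Subtype.val hc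
        simpa using this.symm
      rw [← lie_skew, this, neg_zero]
    intro z
    have hz : ⁅y, z⁆ ∈ LinearMap.range (LieAlgebra.ad k L y) :=
      ⟨z, by simp [LieAlgebra.ad_apply]⟩
    obtain ⟨c', hc'⟩ := hvall ⟨⁅y, z⁆, hz⟩
    refine ⟨-(c' * c⁻¹), ?_⟩
    have hv : (v : L) = c⁻¹ • ⁅y, x⁆ := by
      have := congrArg Subtype.val hc
      simp only [Submodule.coe_smul] at this
      rw [← this, smul_smul, inv_mul_cancel₀ hc0, one_smul]
    have := congrArg Subtype.val hc'
    simp only [Submodule.coe_smul] at this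
    rw [← this, hv, smul_smul, ← lie_skew x y, smul_neg, neg_smul, neg_neg]
  -- degree argument: ⁅y, w⁆ = 0 for homogeneous w of degree ≠ 1
  have hdeg : ∀ d : ℕ, d ≠ 1 → ∀ w ∈ m d, ⁅y, w⁆ = 0 := by
    intro d hd w hw
    obtain ⟨c, hc⟩ := hrange w
    have h1 : ⁅y, w⁆ ∈ m (1 + d) := hbr 1 d y hy w hw
    have h2 : ⁅y, w⁆ ∈ m 2 := by
      rw [hc]
      exact Submodule.smul_mem _ _ (by rw [← ys2]; exact hmem 2 (by omega))
    exact hdisj (1 + d) 2 (by omega) _ h1 h2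
  -- iterated ad x
  set adx : ℕ → L → L := fun j => (fun w => ⁅x, w⁆)^[j] with hadx
  have adx_zero : ∀ z : L, adx 0 z = z := fun z => rfl
  have adx_succ : ∀ (j : ℕ) (z : L), adx (j + 1) z = ⁅x, adx j z⁆ := by
    intro j z
    simp only [hadx]
    rw [Function.iterate_succ_apply']
  have adx_succ' : ∀ (j : ℕ) (z : L), adx (j + 1) z = adx j ⁅x, z⁆ := by
    intro j z
    simp only [hadx]
    rw [Function.iterate_succ_apply]
  have hadxmem : ∀ (d : ℕ), ∀ w ∈ m d, ∀ j : ℕ, adx j w ∈ m (j + d) := by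
    intro d w hw j
    induction j with
    | zero => simpa [adx_zero] using hw
    | succ n ih =>
      rw [adx_succ]
      have := hbr 1 (n + d) x hx _ ih
      convert this using 2
      omega
  -- key induction lemma
  have S : ∀ (i : ℕ) (z : L), (∀ j : ℕ, ⁅y, adx j z⁆ = 0) → ⁅ys (i + 1), z⁆ = 0 := by
    intro i
    induction i with
    | zero =>
      intro z hz
      rw [hys1]
      have := hz 0
      rwa [adx_zero] at this
    | succ n ih =>
      intro z hz
      rw [hrec (n + 1) (by omega), lie_lie]
      have h1 : ⁅ys (n + 1), z⁆ = 0 := ih z hz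
      have h2 : ⁅ys (n + 1), ⁅x, z⁆⁆ = 0 := by
        apply ih
        intro j
        rw [← adx_succ']
        exact hz (j + 1)
      rw [h1, h2, lie_zero, sub_zero]
  -- the common kernel of all ad (ys i)
  set K : Submodule k L := ⨅ i : ℕ, LinearMap.ker (LieAlgebra.ad k L (ys (i + 1))) with hKdef
  have memK : ∀ w : L, w ∈ K ↔ ∀ i : ℕ, ⁅ys (i + 1), w⁆ = 0 := by
    intro w
    simp [hKdef, Submodule.mem_iInf, LinearMap.mem_ker, LieAlgebra.ad_apply]
  have hK2 : ∀ d : ℕ, 2 ≤ d → m d ≤ K := by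
    intro d hd w hw
    rw [memK]
    intro i
    exact S i w (fun j => hdeg (j + d) (by omega) _ (hadxmem d w hw j))
  have hK1 : ∀ w ∈ m 1, ⁅y, w⁆ = 0 → w ∈ K := by
    intro w hw hyw
    rw [memK]
    intro i
    apply S i w
    intro j
    match j with
    | 0 => rw [adx_zero]; exact hyw
    | Nat.succ n => exact hdeg (n + 1 + 1) (by omega) _ (hadxmem 1 w hw (n + 1))
  -- decomposition and the main W statement
  have hS : ∀ d : ℕ, d ≠ 1 → m d ≤ K ⊓ LinearMap.ker (LieAlgebra.ad k L y) := by
    intro d hd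
    rcases Nat.lt_or_ge d 2 with h | h
    · have hd0 : d = 0 := by omega
      rw [hd0, h0]
      exact bot_le
    · refine le_inf (hK2 d h) ?_
      intro w hw
      rw [LinearMap.mem_ker, LieAlgebra.ad_apply]
      exact hdeg d (by omega) w hw
  have htop : ∀ w : L, w ∈ m 1 ⊔ (⨆ (d : ℕ) (_ : d ≠ 1), m d) := by
    intro w
    have : (⊤ : Submodule k L) ≤ m 1 ⊔ (⨆ (d : ℕ) (_ : d ≠ 1), m d) := by
      rw [← hsum.submodule_iSup_eq_top]
      apply iSup_le
      intro d
      by_cases hd : d = 1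
      · rw [hd]; exact le_sup_left
      · exact le_trans (le_iSup₂ (f := fun (d : ℕ) (_ : d ≠ 1) => m d) d hd) le_sup_right
    exact this Submodule.mem_top
  have hW : ∀ w : L, ⁅y, w⁆ = 0 → ∀ i : ℕ, 1 ≤ i → ⁅ys i, w⁆ = 0 := by
    intro w hyw
    obtain ⟨a, ha, b, hb, rfl⟩ := Submodule.mem_sup.mp (htop w)
    have hbK : b ∈ K ⊓ LinearMap.ker (LieAlgebra.ad k L y) :=
      (iSup₂_le hS) hb
    have hby : ⁅y, b⁆ = 0 := by
      have h2 := (Submodule.mem_inf.mp hbK).2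
      rwa [LinearMap.mem_ker, LieAlgebra.ad_apply] at h2
    have hay : ⁅y, a⁆ = 0 := by
      rw [lie_add, hby, add_zero] at hyw
      exact hyw
    have haK : a ∈ K := hK1 a ha hay
    intro i hi
    obtain ⟨i', rfl⟩ : ∃ j, i = j + 1 := ⟨i - 1, by omega⟩
    rw [lie_add, (memK a).mp haK i', (memK b).mp (Submodule.mem_inf.mp hbK).1 i', add_zero]
  -- commutativity of generators
  have hadxys : ∀ (j : ℕ), 1 ≤ j → ∀ l : ℕ, adx l (ys j) = ys (j + l) := by
    intro j hj l
    induction l with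
    | zero => rw [adx_zero, Nat.add_zero]
    | succ n ih =>
      rw [adx_succ, ih, ← hrec (j + n) (by omega)]
      exact congrArg ys (by omega)
  have hcomm1 : ∀ i : ℕ, 1 ≤ i → ∀ j : ℕ, 1 ≤ j → ⁅ys i, ys j⁆ = 0 := by
    intro i hi j hj
    obtain ⟨i', rfl⟩ : ∃ n, i = n + 1 := ⟨i - 1, by omega⟩
    apply S i' (ys j)
    intro l
    rw [hadxys j hj l]
    rcases Nat.eq_or_lt_of_le (show 1 ≤ j + l by omega) with h | h
    · have hj1 : j = 1 := by omega
      have hl0 : l = 0 := by omega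
      rw [hj1, hl0, hys1]
      simp [lie_self]
    · exact hdeg (j + l) (by omega) _ (hmem (j + l) (by omega))
  -- ideal property for generators
  have hideal : ∀ (i : ℕ) (z : L), ⁅ys (i + 1), z⁆ ∈ V := by
    intro i
    induction i with
    | zero =>
      intro z
      rw [hys1]
      obtain ⟨c, hc⟩ := hrange z
      rw [hc, ← ys2]
      exact Submodule.smul_mem _ _ (memV 2 (by omega) hμ'2)
    | succ n ih =>
      intro z
      rw [hrec (n + 1) (by omega), lie_lie]
      exact sub_mem (hxV _ (ih z)) (ih ⁅x, z⁆)
  -- assemble the four conclusions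
  refine ⟨?_, ?_, ?_, hxV⟩
  · -- commutativity
    intro u hu v hv
    have hgenV : ∀ i : ℕ, 1 ≤ i → ⁅ys i, v⁆ = 0 := by
      intro i hi
      induction hv using Submodule.span_induction with
      | mem w hw =>
        obtain ⟨j, hj, rfl⟩ := hw
        exact hcomm1 i hi j (Set.mem_Icc.mp hj).1
      | zero => rw [lie_zero]
      | add a b _ _ ha hb => rw [lie_add, ha, hb, add_zero]
      | smul c a _ ha => rw [lie_smul, ha, smul_zero]
    induction hu using Submodule.span_induction with
    | mem w hw =>
      obtain ⟨j, hj, rfl⟩ := hw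
      exact hgenV j (Set.mem_Icc.mp hj).1
    | zero => rw [zero_lie]
    | add a b _ _ ha hb => rw [add_lie, ha, hb, add_zero]
    | smul c a _ ha => rw [smul_lie, ha, smul_zero]
  · -- ideal
    intro z v hv
    have hvz : ⁅v, z⁆ ∈ V := by
      induction hv using Submodule.span_induction with
      | mem w hw =>
        obtain ⟨i, hi, rfl⟩ := hw
        obtain ⟨hi1, -⟩ := Set.mem_Icc.mp hi
        obtain ⟨i', rfl⟩ : ∃ n, i = n + 1 := ⟨i - 1, by omega⟩
        exact hideal i' z
      | zero => rw [zero_lie]; exact zero_mem _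
      | add a b _ _ ha hb => rw [add_lie]; exact add_mem ha hb
      | smul c a _ ha => rw [smul_lie]; exact Submodule.smul_mem _ _ ha
    rw [← lie_skew]
    exact neg_mem hvz
  · -- ⁅V, W⁆ = 0
    intro v hv w hyw
    induction hv using Submodule.span_induction with
    | mem u hu =>
      obtain ⟨i, hi, rfl⟩ := hu
      exact hW w hyw i (Set.mem_Icc.mp hi).1
    | zero => rw [zero_lie]
    | add a b _ _ ha hb => rw [add_lie, ha, hb, add_zero]
    | smul c a _ ha => rw [smul_lie, ha, smul_zero]
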